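/- For φ(t) = t/(1−t) with inverse ψ(t) = t/(1+t), the noncommutative coefficients c_{r,s} defined by c_{r,s} = Σ_{k,l≥0} g_{k+l+1} Σ_{a₁+⋯+a_k = r} f_{a₁}⋯f_{a_k} Σ_{b₁+⋯+b_l = s} f_{b₁}⋯f_{b_l} (with f_i = 1 for all i, g_m = (−1)^{m+1}, empty products equal 1) satisfy: c_{0,0} = 1, c_{1,1} = 1, c_{0,1} = c_{1,0} = −1, and c_{r,s} = 0 in all other cases. -/

import Mathlib

/- STATEMENT 12: for `φ(t) = t/(1−t)` with inverse `ψ(t) = t/(1+t)` (so `f_i = 1`,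
`g_m = (−1)^{m+1}`), the noncommutative coefficients
`c_{r,s} = Σ_{k,l≥0} g_{k+l+1} (Σ_{a₁+⋯+a_k=r} f_{a₁}⋯f_{a_k}) (Σ_{b₁+⋯+b_l=s} f_{b₁}⋯f_{b_l})`
(compositions into positive parts; empty product `1`) satisfy `c_{0,0} = c_{1,1} = 1`,
`c_{0,1} = c_{1,0} = −1`, and `c_{r,s} = 0` otherwise. -/

def fBor : ℕ → ℤ := fun _ => 1

def gBor : ℕ → ℤ := fun m => (-1) ^ (m+1)

/-- `Σ_{a₁+⋯+a_k = r, a_i ≥ 1} f_{a₁}⋯f_{a_k}` (equals 0 for `k > r`, hence the sum over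
all `k ≥ 0` reduces to `k ≤ r`). -/
def compSum (f : ℕ → ℤ) (k r : ℕ) : ℤ :=
  ∑ a ∈ (Finset.Nat.antidiagonalTuple k r).filter (fun a => ∀ j, 1 ≤ a j), ∏ j, f (a j)

def cBor (r s : ℕ) : ℤ :=
  ∑ k ∈ Finset.range (r+1), ∑ l ∈ Finset.range (s+1),
    gBor (k + l + 1) * compSum fBor k r * compSum fBor l s

/-- number of compositions of `r` into `k` positive parts -/
def SBor (k r : ℕ) : ℕ :=
  ((Finset.Nat.antidiagonalTuple k r).filter (fun a => ∀ j, 1 ≤ a j)).card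

lemma compSum_eq (k r : ℕ) : compSum fBor k r = (SBor k r : ℤ) := by
  simp [compSum, SBor, fBor]

lemma SBor_zero_zero : SBor 0 0 = 1 := by
  simp [SBor, Finset.Nat.antidiagonalTuple_zero_zero]

lemma SBor_zero_succ (r : ℕ) : SBor 0 (r+1) = 0 := by
  simp [SBor, Finset.Nat.antidiagonalTuple_zero_succ]

lemma SBor_eq_zero {k r : ℕ} (h : r < k) : SBor k r = 0 := by
  rw [SBor, Finset.card_eq_zero, Finset.filter_eq_empty_iff]
  intro a ha hpos
  rw [Finset.Nat.mem_antidiagonalTuple] at ha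
  have : k ≤ ∑ i : Fin k, a i := by
    calc k = ∑ _i : Fin k, 1 := by simp
    _ ≤ ∑ i : Fin k, a i := Finset.sum_le_sum fun i _ => hpos i
  omega

lemma SBor_succ (k r : ℕ) : SBor (k+1) r = ∑ j ∈ Finset.range r, SBor k j := by
  classical
  rw [SBor]
  rw [show (∑ j ∈ Finset.range r, SBor k j) = ((Finset.range r).sigma fun j =>
      (Finset.Nat.antidiagonalTuple k j).filter (fun a => ∀ i, 1 ≤ a i)).card from
    (Finset.card_sigma _ _).symm]
  refine Finset.card_nbij' (fun a => ⟨∑ i, Fin.tail a i, Fin.tail a⟩)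
    (fun p => Fin.cons (r - p.1) p.2) ?_ ?_ ?_ ?_
  · intro a ha
    simp only [Finset.mem_coe, Finset.mem_filter, Finset.Nat.mem_antidiagonalTuple] at ha
    obtain ⟨hsum, hpos⟩ := ha
    rw [Fin.sum_univ_succ] at hsum
    have h0 : 1 ≤ a 0 := hpos 0
    simp only [Finset.mem_coe, Finset.mem_sigma, Finset.mem_range, Finset.mem_filter,
      Finset.Nat.mem_antidiagonalTuple]
    refine ⟨?_, ?_, ?_⟩
    · have : ∑ i, Fin.tail a i = ∑ i : Fin k, a i.succ := rfl
      omega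
    · trivial
    · intro i; exact hpos i.succ
  · intro p hp
    simp only [Finset.mem_coe, Finset.mem_sigma, Finset.mem_range, Finset.mem_filter,
      Finset.Nat.mem_antidiagonalTuple] at hp
    obtain ⟨hlt, hsum, hpos⟩ := hp
    simp only [Finset.mem_coe, Finset.mem_filter, Finset.Nat.mem_antidiagonalTuple]
    constructor
    · rw [Fin.sum_univ_succ]
      simp only [Fin.cons_zero, Fin.cons_succ]
      omega
    · intro j
      refine Fin.cases ?_ ?_ j
      · simp only [Fin.cons_zero]; omega
      · intro i; simp only [Fin.cons_succ]; exact hpos i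
  · intro a ha
    simp only [Finset.mem_coe, Finset.mem_filter, Finset.Nat.mem_antidiagonalTuple] at ha
    obtain ⟨hsum, hpos⟩ := ha
    rw [Fin.sum_univ_succ] at hsum
    have : r - ∑ i, Fin.tail a i = a 0 := by
      simp only [Fin.tail]; omega
    simp only [this]
    exact Fin.cons_self_tail a
  · intro p hp
    simp only [Finset.mem_coe, Finset.mem_sigma, Finset.mem_range, Finset.mem_filter,
      Finset.Nat.mem_antidiagonalTuple] at hp
    obtain ⟨hlt, hsum, hpos⟩ := hp
    have h1 : Fin.tail (Fin.cons (r - p.1) p.2 : Fin (k+1) → ℕ) = p.2 :=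
      Fin.tail_cons _ _
    have h2 : ∑ i, Fin.tail (Fin.cons (r - p.1) p.2 : Fin (k+1) → ℕ) i = p.1 := by
      rw [h1, hsum]
    simp only [Sigma.ext_iff, heq_eq_eq]
    exact ⟨h2, h1⟩

/-- `T r = Σ_k (-1)^k S(k,r)`. -/
def TBor (r : ℕ) : ℤ := ∑ k ∈ Finset.range (r+1), (-1)^k * (SBor k r : ℤ)

lemma TBor_zero : TBor 0 = 1 := by
  simp [TBor, SBor_zero_zero]

lemma TBor_inner {j r : ℕ} (h : j ≤ r) :
    ∑ k ∈ Finset.range (r+1), (-1)^k * (SBor k j : ℤ) = TBor j := by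
  rw [TBor]
  refine (Finset.sum_subset (Finset.range_subset_range.mpr (by omega)) ?_).symm
  intro k hk hk'
  simp only [Finset.mem_range] at hk hk'
  rw [SBor_eq_zero (by omega)]
  simp

lemma TBor_succ (r : ℕ) : TBor (r+1) = -∑ j ∈ Finset.range (r+1), TBor j := by
  rw [TBor, Finset.sum_range_succ']
  rw [SBor_zero_succ]
  simp only [pow_zero, Nat.cast_zero, mul_zero, one_mul, add_zero]
  have this1 : ∀ k ∈ Finset.range (r+1), (-1:ℤ)^(k+1) * (SBor (k+1) (r+1) : ℤ)
      = -∑ j ∈ Finset.range (r+1), (-1)^k * (SBor k j : ℤ) := by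
    intro k _
    rw [SBor_succ, pow_succ]
    push_cast
    rw [Finset.mul_sum, ← Finset.sum_neg_distrib]
    congr 1; ext j; ring
  rw [Finset.sum_congr rfl this1, Finset.sum_neg_distrib, Finset.sum_comm]
  congr 1
  refine Finset.sum_congr rfl fun j hj => ?_
  exact TBor_inner (by simp only [Finset.mem_range] at hj; omega)

lemma TBor_one : TBor 1 = -1 := by
  rw [TBor_succ]
  simp [TBor_zero]

lemma TBor_partial (n : ℕ) : ∑ j ∈ Finset.range (n+2), TBor j = 0 := by
  induction n with
  | zero => simp [Finset.sum_range_succ, TBor_zero, TBor_one]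
  | succ n ih =>
      rw [Finset.sum_range_succ, ih, zero_add, TBor_succ, ih, neg_zero]

lemma TBor_eq_zero {r : ℕ} (h : 2 ≤ r) : TBor r = 0 := by
  obtain ⟨m, rfl⟩ : ∃ m, r = m + 2 := ⟨r - 2, by omega⟩
  rw [show m + 2 = (m + 1) + 1 from rfl, TBor_succ, TBor_partial, neg_zero]

lemma cBor_eq (r s : ℕ) : cBor r s = TBor r * TBor s := by
  rw [cBor, TBor, TBor, Finset.sum_mul_sum]
  refine Finset.sum_congr rfl fun k _ => Finset.sum_congr rfl fun l _ => ?_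
  rw [compSum_eq, compSum_eq, gBor]
  rw [show k + l + 1 + 1 = k + l + 2 from rfl, pow_add, pow_add]
  ring

theorem cBor_values :
    cBor 0 0 = 1 ∧ cBor 1 1 = 1 ∧ cBor 0 1 = -1 ∧ cBor 1 0 = -1 ∧
    ∀ r s : ℕ, (r, s) ∉ ({(0,0), (1,1), (0,1), (1,0)} : Set (ℕ × ℕ)) → cBor r s = 0 := by
  refine ⟨?_, ?_, ?_, ?_, ?_⟩
  · rw [cBor_eq, TBor_zero]; ring
  · rw [cBor_eq, TBor_one]; ring
  · rw [cBor_eq, TBor_zero, TBor_one]; ring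
  · rw [cBor_eq, TBor_zero, TBor_one]; ring
  · intro r s hrs
    simp only [Set.mem_insert_iff, Set.mem_singleton_iff, Prod.mk.injEq, not_or] at hrs
    rw [cBor_eq]
    rcases Nat.lt_or_ge r 2 with hr | hr
    · rcases Nat.lt_or_ge s 2 with hs | hs
      · interval_cases r <;> interval_cases s <;> simp_all
      · rw [TBor_eq_zero hs, mul_zero]
    · rw [TBor_eq_zero hr, zero_mul]
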